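/- arXiv:math/9305203 — 2 statements merged into one kernel-verified Lean document; each statement's English description precedes it below -/
import Mathlib

section
/- If g is a Gaussian random vector in R^d with distribution N(0, d^{-1} Id), then for every t > 0, the probability that the Euclidean norm of g is at most t is at most (t·e^{1/2})^d. -/
open MeasureTheory ProbabilityTheory Real NNReal ENNReal

lemma aux_integral_exp_neg_mul_sq_gaussian (d : ℕ) (hd : 0 < d) (b : ℝ) (hb : 0 ≤ b) :
    ∫ x, Real.exp (-b * x ^ 2) ∂(gaussianReal 0 ((d : ℝ≥0))⁻¹) =
      Real.sqrt ((d : ℝ) / (d + 2 * b)) := by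
  have hd' : (0 : ℝ) < d := Nat.cast_pos.mpr hd
  have hv : ((d : ℝ≥0))⁻¹ ≠ 0 := by positivity
  rw [gaussianReal_of_var_ne_zero 0 hv]
  have hmeas : Measurable fun x : ℝ => (gaussianPDFReal 0 ((d : ℝ≥0))⁻¹ x).toNNReal :=
    (measurable_gaussianPDFReal 0 _).real_toNNReal
  have hpdf : gaussianPDF 0 ((d : ℝ≥0))⁻¹ =
      fun x => ((gaussianPDFReal 0 ((d : ℝ≥0))⁻¹ x).toNNReal : ℝ≥0∞) := by
    ext x
    rfl
  rw [hpdf, integral_withDensity_eq_integral_smul hmeas]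
  have heq : ∀ x : ℝ,
      ((gaussianPDFReal 0 ((d : ℝ≥0))⁻¹ x).toNNReal : ℝ≥0) • Real.exp (-b * x ^ 2)
        = (Real.sqrt (2 * π * ((d : ℝ))⁻¹))⁻¹ * Real.exp (-(b + d / 2) * x ^ 2) := by
    intro x
    rw [NNReal.smul_def, smul_eq_mul, Real.coe_toNNReal _ (gaussianPDFReal_nonneg 0 _ x)]
    rw [gaussianPDFReal]
    push_cast
    rw [mul_assoc, ← Real.exp_add]
    congr 1
    field_simp
    ring
  simp_rw [heq]
  rw [integral_const_mul, integral_gaussian]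
  have h1 : (0:ℝ) < b + d / 2 := by positivity
  have h2 : (0:ℝ) < 2 * π * ((d : ℝ))⁻¹ := by positivity
  rw [← Real.sqrt_inv, ← Real.sqrt_mul (by positivity)]
  congr 1
  rw [inv_mul_eq_div, div_div, div_eq_div_iff (by positivity) (by positivity)]
  have hpi := Real.pi_ne_zero
  field_simp
  ring

/-- If `g` is a Gaussian random vector in `ℝ^d` with distribution `N(0, d⁻¹ Id)`, then for
every `t > 0`, the probability that `‖g‖₂ ≤ t` is at most `(t * e^(1/2))^d`. -/
theorem gaussian_norm_small_ball
    {Ω : Type*} [MeasureSpace Ω] [IsProbabilityMeasure (ℙ : Measure Ω)]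
    (d : ℕ) (hd : 0 < d) (g : Ω → EuclideanSpace ℝ (Fin d))
    (hmeas : Measurable g)
    (hindep : iIndepFun
      (fun (i : Fin d) (ω : Ω) => g ω i) ℙ)
    (hlaw : ∀ i : Fin d, Measure.map (fun ω => g ω i) ℙ = gaussianReal 0 ((d : ℝ≥0))⁻¹)
    (t : ℝ) (ht : 0 < t) :
    ℙ {ω | ‖g ω‖ ≤ t} ≤ ENNReal.ofReal ((t * Real.exp (1 / 2)) ^ d) := by
  rcases le_or_gt 1 t with h1 | h1
  · refine le_trans prob_le_one ?_
    rw [show (1 : ℝ≥0∞) = ENNReal.ofReal 1 by simp]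
    apply ENNReal.ofReal_le_ofReal
    apply one_le_pow₀
    have h2 : (1 : ℝ) ≤ Real.exp (1 / 2) := by
      rw [show (1:ℝ) = Real.exp 0 by simp]
      exact Real.exp_le_exp.mpr (by norm_num)
    nlinarith
  · -- main case: t < 1
    set l : ℝ := (d : ℝ) * (1 - t ^ 2) / (2 * t ^ 2) with hl_def
    have hd' : (0 : ℝ) < d := Nat.cast_pos.mpr hd
    have hl : 0 ≤ l := by
      apply div_nonneg _ (by positivity)
      have : (0:ℝ) ≤ 1 - t ^ 2 := by nlinarith
      positivity
    set X : Fin d → Ω → ℝ := fun i ω => (g ω i) ^ 2 with hX_def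
    have hgi : ∀ i, Measurable fun ω => g ω i := fun i => ((WithLp.measurable_ofLp _ _).comp hmeas).eval
    have hXmeas : ∀ i, Measurable (X i) := fun i => (hgi i).pow_const 2
    have hXnonneg : ∀ i ω, 0 ≤ X i ω := fun i ω => sq_nonneg _
    have hindepX : iIndepFun X ℙ :=
      hindep.comp (fun _ => fun x : ℝ => x ^ 2) (fun _ => measurable_id.pow_const 2)
    have hset : {ω | ‖g ω‖ ≤ t} = {ω | (∑ i, X i) ω ≤ t ^ 2} := by
      ext ω
      simp only [Set.mem_setOf_eq, Finset.sum_apply]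
      rw [EuclideanSpace.norm_eq]
      conv_lhs => rw [show t = Real.sqrt (t ^ 2) by rw [Real.sqrt_sq ht.le]]
      rw [Real.sqrt_le_sqrt_iff (by positivity)]
      simp [hX_def, Real.norm_eq_abs, sq_abs]
    have hSmeas : Measurable (∑ i, X i) := by
      have : (∑ i, X i) = fun ω => ∑ i, X i ω := by
        ext ω; simp [Finset.sum_apply]
      rw [this]
      exact Finset.measurable_sum Finset.univ fun i _ => hXmeas i
    have hint : Integrable (fun ω => Real.exp ((-l) * (∑ i, X i) ω)) ℙ := by
      refine Integrable.mono' (integrable_const 1)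
        ((hSmeas.const_mul (-l)).exp.aestronglyMeasurable) ?_
      filter_upwards with ω
      rw [Real.norm_eq_abs, Real.abs_exp]
      apply Real.exp_le_one_iff.mpr
      have hS0 : 0 ≤ (∑ i, X i) ω := by
        rw [Finset.sum_apply]
        exact Finset.sum_nonneg fun i _ => hXnonneg i ω
      nlinarith
    have hcher := measure_le_le_exp_mul_mgf (μ := ℙ) (X := ∑ i, X i) (t := -l)
      (t ^ 2) (neg_nonpos.mpr hl) hint
    have hmgf_sum : mgf (∑ i, X i) ℙ (-l) = ∏ i : Fin d, mgf (X i) ℙ (-l) :=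
      hindepX.mgf_sum hXmeas Finset.univ
    have hmgf : ∀ i, mgf (X i) ℙ (-l) = t := by
      intro i
      have hmap : ∫ ω, Real.exp ((-l) * (g ω i) ^ 2) ∂ℙ
          = ∫ x, Real.exp ((-l) * x ^ 2) ∂(Measure.map (fun ω => g ω i) ℙ) := by
        rw [integral_map (hgi i).aemeasurable
          (Continuous.aestronglyMeasurable (by continuity))]
      have hfrac : (d : ℝ) / ((d : ℝ) + 2 * l) = t ^ 2 := by
        rw [hl_def]
        field_simp [hd'.ne']
        ring
      rw [mgf, hX_def]
      simp only []
      rw [hmap, hlaw i, aux_integral_exp_neg_mul_sq_gaussian d hd l hl, hfrac,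
        Real.sqrt_sq ht.le]
    have hprod : ∏ i : Fin d, mgf (X i) ℙ (-l) = t ^ d := by
      simp [hmgf]
    have hlt2 : l * t ^ 2 ≤ (d : ℝ) / 2 := by
      have heq2 : l * t ^ 2 = (d : ℝ) * (1 - t ^ 2) / 2 := by
        rw [hl_def]
        field_simp
      rw [heq2]
      nlinarith
    have hbound : Real.exp (-(-l) * t ^ 2) * mgf (∑ i, X i) ℙ (-l)
        ≤ (t * Real.exp (1 / 2)) ^ d := by
      rw [hmgf_sum, hprod, neg_neg, mul_pow, ← Real.exp_nat_mul]
      have h2 : Real.exp (l * t ^ 2) ≤ Real.exp ((d : ℝ) * (1 / 2)) := by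
        apply Real.exp_le_exp.mpr
        linarith
      have ht' : 0 ≤ t ^ d := by positivity
      nlinarith [Real.exp_pos (l * t ^ 2), Real.exp_pos ((d:ℝ) * (1/2))]
    rw [hset, ← ENNReal.ofReal_toReal (measure_ne_top ℙ _)]
    exact ENNReal.ofReal_le_ofReal (le_trans hcher hbound)
end

section
/- For any operator u between finite-dimensional normed spaces, the k-th Kolmogorov number of the adjoint u* equals the k-th Gelfand number of u: d_k(u*) = c_k(u). -/
open Module

/-- The `k`-th Gelfand number of an operator `u : X → Y`:
`c_k(u) = inf {‖u|_Z‖ : Z ⊆ X, codim Z < k}`. -/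
noncomputable def gelfandNumber {X Y : Type*} [NormedAddCommGroup X] [NormedSpace ℝ X]
    [NormedAddCommGroup Y] [NormedSpace ℝ Y] (k : ℕ) (u : X →L[ℝ] Y) : ℝ :=
  sInf {r : ℝ | ∃ Z : Submodule ℝ X, Module.finrank ℝ X - Module.finrank ℝ Z < k ∧
    r = ‖u.comp (Z.subtypeL)‖}

/-- The `k`-th Kolmogorov number of an operator `u : X → Y`:
`d_k(u) = inf {sup_{‖x‖ ≤ 1} dist (u x) W : W ⊆ Y, dim W < k}`. -/
noncomputable def kolmogorovNumber {X Y : Type*} [NormedAddCommGroup X] [NormedSpace ℝ X]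
    [NormedAddCommGroup Y] [NormedSpace ℝ Y] (k : ℕ) (u : X →L[ℝ] Y) : ℝ :=
  sInf {r : ℝ | ∃ W : Submodule ℝ Y, Module.finrank ℝ W < k ∧
    r = sSup {s : ℝ | ∃ x : X, ‖x‖ ≤ 1 ∧ s = Metric.infDist (u x) (W : Set Y)}}

section Aux

variable {X Y : Type*} [NormedAddCommGroup X] [NormedSpace ℝ X]
  [NormedAddCommGroup Y] [NormedSpace ℝ Y]

/-- The annihilator of a subspace `Z ⊆ X` inside the continuous dual of `X`. -/
noncomputable def cAnn (Z : Submodule ℝ X) : Submodule ℝ (X →L[ℝ] ℝ) where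
  carrier := {f | ∀ x ∈ Z, f x = 0}
  add_mem' := fun {f g} hf hg x hx => by
    simp [hf x hx, hg x hx]
  zero_mem' := fun x _ => rfl
  smul_mem' := fun c f hf x hx => by simp [hf x hx]

lemma mem_cAnn {Z : Submodule ℝ X} {f : X →L[ℝ] ℝ} :
    f ∈ cAnn Z ↔ ∀ x ∈ Z, f x = 0 := Iff.rfl

lemma norm_comp_subtypeL_le (Z : Submodule ℝ X) (f : X →L[ℝ] ℝ) :
    ‖f.comp Z.subtypeL‖ ≤ ‖f‖ := by
  refine ContinuousLinearMap.opNorm_le_bound _ (norm_nonneg f) fun z => ?_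
  simpa using f.le_opNorm (z : X)

/-- Key duality: the distance from `f` to the annihilator of `Z` equals the norm of the
restriction of `f` to `Z` (Hahn–Banach). -/
lemma infDist_cAnn (Z : Submodule ℝ X) (f : X →L[ℝ] ℝ) :
    Metric.infDist f (cAnn Z : Set (X →L[ℝ] ℝ)) = ‖f.comp Z.subtypeL‖ := by
  obtain ⟨h, hext, hnorm⟩ := exists_extension_norm_eq Z (f.comp Z.subtypeL)
  apply le_antisymm
  · have hmem : f - h ∈ cAnn Z := by
      intro x hx
      have := hext ⟨x, hx⟩
      simp only [ContinuousLinearMap.comp_apply, Submodule.subtypeL_apply] at this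
      simp [this]
    calc Metric.infDist f (cAnn Z : Set (X →L[ℝ] ℝ)) ≤ dist f (f - h) :=
          Metric.infDist_le_dist_of_mem hmem
      _ = ‖h‖ := by simp [dist_eq_norm]
      _ = _ := hnorm
  · rw [Metric.infDist_eq_iInf]
    have : Nonempty (cAnn Z : Set (X →L[ℝ] ℝ)) := ⟨⟨0, (cAnn Z).zero_mem⟩⟩
    refine le_ciInf fun g => ?_
    have hg0 : (g : X →L[ℝ] ℝ).comp Z.subtypeL = 0 := by
      ext z
      exact g.2 (z : X) z.2
    have : f.comp Z.subtypeL = (f - (g : X →L[ℝ] ℝ)).comp Z.subtypeL := by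
      simp [ContinuousLinearMap.sub_comp, hg0]
    rw [this, dist_eq_norm]
    exact norm_comp_subtypeL_le Z _

/-- The operator norm as a sup of norms of scalar compositions over the dual unit ball. -/
lemma sSup_norm_comp_eq (v : X →L[ℝ] Y) :
    sSup {s : ℝ | ∃ g : Y →L[ℝ] ℝ, ‖g‖ ≤ 1 ∧ s = ‖g.comp v‖} = ‖v‖ := by
  set S := {s : ℝ | ∃ g : Y →L[ℝ] ℝ, ‖g‖ ≤ 1 ∧ s = ‖g.comp v‖} with hS
  have hmem0 : (0 : ℝ) ∈ S := ⟨0, by simp, by simp⟩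
  have hbdd : BddAbove S := by
    refine ⟨‖v‖, ?_⟩
    rintro s ⟨g, hg, rfl⟩
    calc ‖g.comp v‖ ≤ ‖g‖ * ‖v‖ := ContinuousLinearMap.opNorm_comp_le _ _
      _ ≤ 1 * ‖v‖ := by gcongr
      _ = ‖v‖ := one_mul _
  apply le_antisymm
  · refine csSup_le ⟨0, hmem0⟩ ?_
    rintro s ⟨g, hg, rfl⟩
    calc ‖g.comp v‖ ≤ ‖g‖ * ‖v‖ := ContinuousLinearMap.opNorm_comp_le _ _
      _ ≤ 1 * ‖v‖ := by gcongr
      _ = ‖v‖ := one_mul _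
  · refine ContinuousLinearMap.opNorm_le_bound v (le_csSup hbdd hmem0) fun x => ?_
    obtain ⟨g, hg1, hgx⟩ := exists_dual_vector'' ℝ (v x)
    have hgx' : g (v x) = ‖v x‖ := by exact_mod_cast hgx
    calc ‖v x‖ = g (v x) := hgx'.symm
      _ ≤ ‖(g.comp v) x‖ := by
          rw [ContinuousLinearMap.comp_apply, Real.norm_eq_abs]
          exact le_abs_self _
      _ ≤ ‖g.comp v‖ * ‖x‖ := (g.comp v).le_opNorm x
      _ ≤ sSup S * ‖x‖ :=
          mul_le_mul_of_nonneg_right (le_csSup hbdd ⟨g, hg1, rfl⟩) (norm_nonneg x)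

variable [FiniteDimensional ℝ X]

/-- The annihilator of `Z` has dimension equal to the codimension of `Z`. -/
lemma finrank_cAnn (Z : Submodule ℝ X) :
    finrank ℝ (cAnn Z) = finrank ℝ X - finrank ℝ Z := by
  let e : Module.Dual ℝ X ≃ₗ[ℝ] (X →L[ℝ] ℝ) := LinearMap.toContinuousLinearMap
  have hmap : (Z.dualAnnihilator).map (e : Module.Dual ℝ X →ₗ[ℝ] (X →L[ℝ] ℝ)) = cAnn Z := by
    ext f
    rw [Submodule.mem_map_equiv, mem_cAnn, Submodule.mem_dualAnnihilator]
    exact Iff.rfl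
  have h1 : finrank ℝ (cAnn Z) = finrank ℝ Z.dualAnnihilator := by
    rw [← hmap]
    exact (LinearEquiv.finrank_map_eq e _)
  have h2 : finrank ℝ Z.dualAnnihilator = finrank ℝ (X ⧸ Z) :=
    (LinearEquiv.finrank_eq (Subspace.quotEquivAnnihilator Z)).symm
  have h3 := Submodule.finrank_quotient_add_finrank Z
  have h4 : finrank ℝ Z ≤ finrank ℝ X := Z.finrank_le
  omega

/-- The pre-annihilator in `X` of a subspace of the continuous dual. -/
noncomputable def preAnn (W : Submodule ℝ (X →L[ℝ] ℝ)) : Submodule ℝ X :=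
  (W.map ((LinearMap.toContinuousLinearMap :
    Module.Dual ℝ X ≃ₗ[ℝ] (X →L[ℝ] ℝ)).symm :
      (X →L[ℝ] ℝ) →ₗ[ℝ] Module.Dual ℝ X)).dualCoannihilator

lemma mem_preAnn {W : Submodule ℝ (X →L[ℝ] ℝ)} {x : X} :
    x ∈ preAnn W ↔ ∀ f ∈ W, f x = 0 := by
  simp only [preAnn, Submodule.mem_dualCoannihilator, Submodule.mem_map,
    forall_exists_index, and_imp]
  constructor
  · intro h f hf
    exact h _ f hf rfl
  · rintro h φ f hf rfl
    exact h f hf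

lemma finrank_preAnn (W : Submodule ℝ (X →L[ℝ] ℝ)) :
    finrank ℝ X - finrank ℝ (preAnn W) ≤ finrank ℝ W := by
  set W' := W.map ((LinearMap.toContinuousLinearMap :
    Module.Dual ℝ X ≃ₗ[ℝ] (X →L[ℝ] ℝ)).symm :
      (X →L[ℝ] ℝ) →ₗ[ℝ] Module.Dual ℝ X) with hW'
  have h1 := Subspace.finrank_add_finrank_dualCoannihilator_eq W'
  have h2 : finrank ℝ W' = finrank ℝ W := LinearEquiv.finrank_map_eq _ _
  have h3 : preAnn W = W'.dualCoannihilator := rfl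
  have h4 : finrank ℝ X = finrank ℝ W + finrank ℝ W'.dualCoannihilator := by
    rw [← h2]; exact h1.symm
  rw [h3, h4, Nat.add_sub_cancel]

lemma subset_cAnn_preAnn (W : Submodule ℝ (X →L[ℝ] ℝ)) : (W : Set (X →L[ℝ] ℝ)) ⊆ cAnn (preAnn W) := by
  intro f hf x hx
  exact mem_preAnn.mp hx f hf

end Aux

/-- For an operator `u` between finite-dimensional normed spaces, the `k`-th Kolmogorov
number of the adjoint `u* : Y* → X*` equals the `k`-th Gelfand number of `u`. -/
theorem kolmogorov_adjoint_eq_gelfand {X Y : Type*}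
    [NormedAddCommGroup X] [NormedSpace ℝ X] [FiniteDimensional ℝ X]
    [NormedAddCommGroup Y] [NormedSpace ℝ Y] [FiniteDimensional ℝ Y]
    (k : ℕ) (u : X →L[ℝ] Y) :
    kolmogorovNumber k
      (((ContinuousLinearMap.compL ℝ X Y ℝ).flip u :
          StrongDual ℝ Y →L[ℝ] StrongDual ℝ X)) =
      gelfandNumber k u := by
  set ua : StrongDual ℝ Y →L[ℝ] StrongDual ℝ X :=
    (ContinuousLinearMap.compL ℝ X Y ℝ).flip u with hua
  have hua_apply : ∀ g : Y →L[ℝ] ℝ, ua g = g.comp u := fun g => rfl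
  -- the sup set for a given W
  have hSW_bdd : ∀ W : Submodule ℝ (X →L[ℝ] ℝ),
      BddAbove {s : ℝ | ∃ g : Y →L[ℝ] ℝ, ‖g‖ ≤ 1 ∧
        s = Metric.infDist (ua g) (W : Set (X →L[ℝ] ℝ))} := by
    intro W
    refine ⟨‖ua‖, ?_⟩
    rintro s ⟨g, hg, rfl⟩
    calc Metric.infDist (ua g) (W : Set (X →L[ℝ] ℝ)) ≤ dist (ua g) 0 :=
          Metric.infDist_le_dist_of_mem W.zero_mem
      _ = ‖ua g‖ := by simp
      _ ≤ ‖ua‖ * ‖g‖ := ua.le_opNorm g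
      _ ≤ ‖ua‖ * 1 := by gcongr
      _ = ‖ua‖ := mul_one _
  -- key computation: for the annihilator of Z the sup equals the restricted norm
  have key : ∀ Z : Submodule ℝ X,
      sSup {s : ℝ | ∃ g : Y →L[ℝ] ℝ, ‖g‖ ≤ 1 ∧
        s = Metric.infDist (ua g) ((cAnn Z : Submodule ℝ (X →L[ℝ] ℝ)) : Set (X →L[ℝ] ℝ))} =
      ‖u.comp Z.subtypeL‖ := by
    intro Z
    have hsets : {s : ℝ | ∃ g : Y →L[ℝ] ℝ, ‖g‖ ≤ 1 ∧
        s = Metric.infDist (ua g) ((cAnn Z : Submodule ℝ (X →L[ℝ] ℝ)) : Set (X →L[ℝ] ℝ))} =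
        {s : ℝ | ∃ g : Y →L[ℝ] ℝ, ‖g‖ ≤ 1 ∧ s = ‖g.comp (u.comp Z.subtypeL)‖} := by
      ext s
      constructor
      · rintro ⟨g, hg, rfl⟩
        exact ⟨g, hg, by rw [hua_apply, infDist_cAnn, ContinuousLinearMap.comp_assoc]⟩
      · rintro ⟨g, hg, rfl⟩
        exact ⟨g, hg, by rw [hua_apply, infDist_cAnn, ContinuousLinearMap.comp_assoc]⟩
    rw [hsets, sSup_norm_comp_eq]
  unfold kolmogorovNumber gelfandNumber
  apply csInf_eq_csInf_of_forall_exists_le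
  · -- every Kolmogorov value dominates a Gelfand value
    rintro r ⟨W, hWk, rfl⟩
    refine ⟨‖u.comp (preAnn W).subtypeL‖, ⟨preAnn W, ?_, rfl⟩, ?_⟩
    · exact lt_of_le_of_lt (finrank_preAnn W) hWk
    · rw [← key (preAnn W)]
      refine csSup_le ⟨Metric.infDist (ua 0)
        ((cAnn (preAnn W) : Submodule ℝ (X →L[ℝ] ℝ)) : Set (X →L[ℝ] ℝ)), 0, by simp, rfl⟩ ?_
      rintro s ⟨g, hg, rfl⟩
      refine le_csSup_of_le (hSW_bdd W) ⟨g, hg, rfl⟩ ?_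
      exact Metric.infDist_le_infDist_of_subset (subset_cAnn_preAnn W) ⟨0, W.zero_mem⟩
  · -- every Gelfand value is a Kolmogorov value
    rintro r ⟨Z, hZk, rfl⟩
    refine ⟨sSup {s : ℝ | ∃ g : Y →L[ℝ] ℝ, ‖g‖ ≤ 1 ∧
      s = Metric.infDist (ua g) ((cAnn Z : Submodule ℝ (X →L[ℝ] ℝ)) : Set (X →L[ℝ] ℝ))},
      ⟨cAnn Z, ?_, rfl⟩, (key Z).le⟩
    rw [finrank_cAnn]
    exact hZk
end
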